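/- If [P]* and [Q]* are members of V* whose intersection [P]* ∩ [Q]* is uncountable, then [P]* ∩ [Q]* ∈ V*; moreover in this case there exist finite sequences s, t such that P_s ∩ Q_t is a trimmed tree and [P_s ∩ Q_t]* = [P]* ∩ [Q]*. Consequently, if [P]* and [Q]* are incompatible (their intersection contains no member of V*), then [P]* ∩ [Q]* is countable. -/
import Mathlib


open Set Cardinal

/-- The set of branches of the trimmed tree `T[A,α]`:
all `β` agreeing with `α` outside of `A`. -/
def branches (X : ℕ → Type) (A : Set ℕ) (α : ∀ i, X i) : Set (∀ i, X i) :=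
  {β | ∀ n ∉ A, β n = α n}

/-- The family `V` of branch sets of trimmed trees. -/
def treeV (X : ℕ → Type) : Set (Set (∀ i, X i)) :=
  {S | ∃ A α, A.Infinite ∧ S = branches X A α}

/-- `[T]*`: all `β` agreeing with `α` outside of `A`, up to finitely many exceptions. -/
def starBranches (X : ℕ → Type) (A : Set ℕ) (α : ∀ i, X i) : Set (∀ i, X i) :=
  {β | {n | n ∉ A ∧ β n ≠ α n}.Finite}

/-- The family `V*`. -/
def treeVstar (X : ℕ → Type) : Set (Set (∀ i, X i)) :=
  {S | ∃ A α, A.Infinite ∧ S = starBranches X A α}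

/-- The ideal `d⁰(F)`. -/
def d0 {X : ℕ → Type} (F : Set (Set (∀ i, X i))) : Set (Set (∀ i, X i)) :=
  {Y | ∀ W ∈ F, ∃ U ∈ F, U ⊆ W ∧ U ∩ Y = ∅}

/-- `α_s`: overwrite `α` by `s` on `{0,…,n-1}`. -/
def modifySeq (X : ℕ → Type) (n : ℕ) (s α : ∀ i, X i) : ∀ i, X i :=
  fun i => if i < n then s i else α i

/-- `add(d⁰(V))`: the least cardinality of a subfamily of `d⁰(V)` whose union
is not in `d⁰(V)`. -/
noncomputable def addd0 (X : ℕ → Type) : Cardinal :=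
  sInf {c | ∃ G : Set (Set (∀ i, X i)), G ⊆ d0 (treeV X) ∧ ⋃₀ G ∉ d0 (treeV X) ∧ c = #G}

/-- Functions eventually equal to a fixed `γ` form a countable set. -/
lemma countable_ev (X : ℕ → Type) [∀ i, Countable (X i)] (γ : ∀ i, X i) :
    {f : ∀ i, X i | {i | f i ≠ γ i}.Finite}.Countable := by
  have hsub : {f : ∀ i, X i | {i | f i ≠ γ i}.Finite}
      ⊆ ⋃ s : Finset ℕ, {f | ∀ i ∉ s, f i = γ i} := by
    intro f hf
    exact mem_iUnion.2 ⟨hf.toFinset, fun i hi => by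
      by_contra h; exact hi (hf.mem_toFinset.2 h)⟩
  refine Set.Countable.mono hsub (Set.countable_iUnion fun s => ?_)
  rw [← Set.countable_coe_iff]
  have inj : Function.Injective
      (fun f : ↥{f : ∀ i, X i | ∀ i ∉ s, f i = γ i} => (fun i : s => (f : ∀ i, X i) i)) := by
    intro f g h
    ext i
    by_cases hi : i ∈ s
    · exact congrFun h ⟨i, hi⟩
    · rw [f.2 i hi, g.2 i hi]
  exact inj.countable

theorem stmt15 (X : ℕ → Type) [∀ i, Countable (X i)] [∀ i, Nontrivial (X i)]
    (A B : Set ℕ) (hA : A.Infinite) (hB : B.Infinite) (α β : ∀ i, X i) :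
    (¬ (starBranches X A α ∩ starBranches X B β).Countable →
      (starBranches X A α ∩ starBranches X B β ∈ treeVstar X ∧
        ∃ (n m : ℕ) (s t : ∀ i, X i) (C : Set ℕ) (γ : ∀ i, X i), C.Infinite ∧
          branches X (A \ {i | i < n}) (modifySeq X n s α) ∩
              branches X (B \ {i | i < m}) (modifySeq X m t β) = branches X C γ ∧
          starBranches X C γ = starBranches X A α ∩ starBranches X B β)) ∧
    ((∀ U ∈ treeVstar X, ¬ U ⊆ starBranches X A α ∩ starBranches X B β) →
      (starBranches X A α ∩ starBranches X B β).Countable) := by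
  classical
  set I := starBranches X A α ∩ starBranches X B β with hIdef
  by_cases hF : {n | n ∉ A ∧ n ∉ B ∧ α n ≠ β n}.Finite
  · set γ : ∀ i, X i := fun i => if i ∈ A then β i else α i with hγdef
    by_cases hAB : (A ∩ B).Infinite
    · -- Main case: the intersection is `starBranches X C γ`.
      obtain ⟨N0, hN0⟩ := hF.bddAbove
      set N := N0 + 1 with hNdef
      have hNbound : ∀ n, n ∉ A → n ∉ B → α n ≠ β n → n < N := by
        intro n h1 h2 h3
        have := hN0 ⟨h1, h2, h3⟩
        omega
      set C : Set ℕ := (A ∩ B) \ {i | i < N} with hCdef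
      have hCinf : C.Infinite := hAB.diff (Set.finite_Iio N)
      -- starBranches X C γ = I
      have hstar : starBranches X C γ = I := by
        ext f
        constructor
        · intro hf
          constructor
          · refine (hf.subset ?_ : _)
            intro n hn
            refine ⟨fun hC => hn.1 hC.1.1, ?_⟩
            have : γ n = α n := if_neg hn.1
            rw [this]; exact hn.2
          · refine ((hf.union hF).subset ?_ : _)
            intro n hn
            by_cases hnA : n ∈ A
            · left
              refine ⟨fun hC => hn.1 hC.1.2, ?_⟩
              have : γ n = β n := if_pos hnA
              rw [this]; exact hn.2
            · by_cases hfa : f n = α n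
              · right
                refine ⟨hnA, hn.1, ?_⟩
                rw [← hfa]; exact hn.2
              · left
                refine ⟨fun hC => hnA hC.1.1, ?_⟩
                have : γ n = α n := if_neg hnA
                rw [this]; exact hfa
        · rintro ⟨h1, h2⟩
          refine (((h1.union h2).union (Set.finite_Iio N)).subset ?_ : _)
          intro n hn
          rcases hn with ⟨hnC, hnγ⟩
          by_cases hnN : n < N
          · exact Or.inr hnN
          · have hnAB : n ∉ A ∩ B := fun h => hnC ⟨h, hnN⟩
            by_cases hnA : n ∈ A
            · have hnB : n ∉ B := fun h => hnAB ⟨hnA, h⟩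
              have : γ n = β n := if_pos hnA
              exact Or.inl (Or.inr ⟨hnB, by rw [← this]; exact hnγ⟩)
            · have : γ n = α n := if_neg hnA
              exact Or.inl (Or.inl ⟨hnA, by rw [← this]; exact hnγ⟩)
      refine ⟨fun _ => ⟨⟨C, γ, hCinf, hstar.symm⟩, ?_⟩, fun hU => ?_⟩
      · -- the branches part
        refine ⟨N, N, γ, γ, C, γ, hCinf, ?_, hstar⟩
        ext f
        constructor
        · rintro ⟨hfa, hfb⟩
          intro n hnC
          by_cases hnN : n < N
          · have h1 : f n = modifySeq X N γ α n := hfa n (fun h => h.2 hnN)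
            rw [h1]; exact if_pos hnN
          · have hnAB : n ∉ A ∩ B := fun h => hnC ⟨h, hnN⟩
            by_cases hnA : n ∈ A
            · have hnB : n ∉ B := fun h => hnAB ⟨hnA, h⟩
              have h1 : f n = modifySeq X N γ β n := hfb n (fun h => hnB h.1)
              rw [h1]
              show (if n < N then γ n else β n) = γ n
              rw [if_neg hnN]
              exact (if_pos hnA).symm
            · have h1 : f n = modifySeq X N γ α n := hfa n (fun h => hnA h.1)
              rw [h1]
              show (if n < N then γ n else α n) = γ n
              rw [if_neg hnN]
              exact (if_neg hnA).symm
        · intro hf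
          constructor
          · intro n hn
            show f n = if n < N then γ n else α n
            by_cases hnN : n < N
            · rw [if_pos hnN]; exact hf n (fun h => h.2 hnN)
            · have hnA : n ∉ A := fun h => hn ⟨h, hnN⟩
              rw [if_neg hnN, hf n (fun h => hnA h.1.1)]
              exact if_neg hnA
          · intro n hn
            show f n = if n < N then γ n else β n
            by_cases hnN : n < N
            · rw [if_pos hnN]; exact hf n (fun h => h.2 hnN)
            · have hnB : n ∉ B := fun h => hn ⟨h, hnN⟩
              rw [if_neg hnN, hf n (fun h => hnB h.1.2)]
              by_cases hnA : n ∈ A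
              · exact if_pos hnA
              · show (if n ∈ A then β n else α n) = β n
                rw [if_neg hnA]
                by_contra hne
                exact hnN (hNbound n hnA hnB hne)
      · exact absurd (hstar ▸ subset_rfl)
          (hU (starBranches X C γ) ⟨C, γ, hCinf, rfl⟩)
    · -- A ∩ B finite: the intersection is countable.
      have hABf : (A ∩ B).Finite := Set.not_infinite.mp hAB
      have hIcount : I.Countable := by
        refine (countable_ev X γ).mono ?_
        rintro f ⟨h1, h2⟩
        refine (((h1.union h2).union hABf).subset ?_ : _)
        intro n hn
        by_cases hnA : n ∈ A
        · by_cases hnB : n ∈ B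
          · exact Or.inr ⟨hnA, hnB⟩
          · have : γ n = β n := if_pos hnA
            exact Or.inl (Or.inr ⟨hnB, by rw [← this]; exact hn⟩)
        · have : γ n = α n := if_neg hnA
          exact Or.inl (Or.inl ⟨hnA, by rw [← this]; exact hn⟩)
      exact ⟨fun h => absurd hIcount h, fun _ => hIcount⟩
  · -- F infinite: the intersection is empty.
    have hIempty : I = ∅ := by
      ext f
      simp only [Set.mem_empty_iff_false, iff_false]
      rintro ⟨h1, h2⟩
      refine hF ((h1.union h2).subset ?_)
      rintro n ⟨hnA, hnB, hne⟩
      by_cases hfa : f n = α n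
      · exact Or.inr ⟨hnB, by rw [hfa]; exact hne⟩
      · exact Or.inl ⟨hnA, hfa⟩
    have hIcount : I.Countable := hIempty ▸ Set.countable_empty
    exact ⟨fun h => absurd hIcount h, fun _ => hIcount⟩
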